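/- There exists n₀ such that for all integers n ≥ n₀ the following holds, where b = 16 log⁴ n and g = 32 log⁵ n. Let m and d be integers with m ≤ n-1 and √n/log n ≤ d ≤ 2√n, and let F be an m-vertex graph with minimum degree at least d-1 such that |N_F(u) ∩ N_F(v)| ≤ √n/b for all distinct u, v ∈ V(F). Then there exists a function C mapping subsets of V(F) to subsets of V(F) such that for every set I ⊆ V(F) of size d satisfying e(F²[I]) ≤ n/g, there exists a set T with T ⊆ I ⊆ C(T), |T| ≤ 2√n/log n, and |C(T)| ≤ 5n/d. -/

import Mathlib

/-- The number of neighbors of a vertex (its degree). -/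
noncomputable def ndeg {V : Type} (G : SimpleGraph V) (v : V) : ℕ :=
  Nat.card ↥(G.neighborSet v)

/-- `e(F²[J])`: the number of edges, counted with multiplicity, of the multigraph `F²`
(in which the multiplicity of a pair `uv` is the number of common neighbors of `u` and `v`)
induced on `J`; it equals half the sum over ordered pairs of distinct vertices of `J`. -/
noncomputable def eSquare {V : Type} [DecidableEq V] (F : SimpleGraph V) (J : Finset V) : ℝ :=
  (∑ p ∈ J.offDiag, (Nat.card ↥(F.neighborSet p.1 ∩ F.neighborSet p.2) : ℝ)) / 2


open Finset

namespace Cont7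

variable {m : ℕ}

/-- weighted degree of `u` into `P` -/
def degIn (w : Fin m → Fin m → ℕ) (P : Finset (Fin m)) (u : Fin m) : ℕ :=
  ∑ v ∈ P.erase u, w u v

lemma degIn_mono (w : Fin m → Fin m → ℕ) {P Q : Finset (Fin m)} (h : P ⊆ Q) (u : Fin m) :
    degIn w P u ≤ degIn w Q u :=
  Finset.sum_le_sum_of_subset (Finset.erase_subset_erase _ h)

lemma maxset_nonempty (w : Fin m → Fin m → ℕ) {A : Finset (Fin m)} (hA : A.Nonempty) :
    (A.filter (fun u => ∀ x ∈ A, degIn w A x ≤ degIn w A u)).Nonempty := by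
  obtain ⟨b, hb, hmax⟩ := A.exists_max_image (fun u => degIn w A u) hA
  exact ⟨b, Finset.mem_filter.2 ⟨hb, hmax⟩⟩

/-- canonical maximum-degree vertex -/
noncomputable def pick (w : Fin m → Fin m → ℕ) (A : Finset (Fin m)) (hA : A.Nonempty) : Fin m :=
  (A.filter (fun u => ∀ x ∈ A, degIn w A x ≤ degIn w A u)).min' (maxset_nonempty w hA)

lemma pick_mem (w : Fin m → Fin m → ℕ) (A : Finset (Fin m)) (hA : A.Nonempty) :
    pick w A hA ∈ A := by
  have := Finset.min'_mem _ (maxset_nonempty w hA)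
  exact (Finset.mem_filter.1 this).1

lemma pick_max (w : Fin m → Fin m → ℕ) (A : Finset (Fin m)) (hA : A.Nonempty) :
    ∀ x ∈ A, degIn w A x ≤ degIn w A (pick w A hA) := by
  have := Finset.min'_mem _ (maxset_nonempty w hA)
  exact (Finset.mem_filter.1 this).2

lemma nonempty_of_lt {K : ℕ} {A : Finset (Fin m)} (h : K < A.card) : A.Nonempty :=
  Finset.card_pos.1 (Nat.lt_of_le_of_lt (Nat.zero_le K) h)

/-- one step of the container process; decision set `S`. -/
noncomputable def pstep (w : Fin m → Fin m → ℕ) (K δn : ℕ) (S : Finset (Fin m))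
    (AP : Finset (Fin m) × Finset (Fin m)) : Finset (Fin m) × Finset (Fin m) :=
  if h : K < AP.1.card then
    if pick w AP.1 (nonempty_of_lt h) ∈ S then
      (((AP.1.erase (pick w AP.1 (nonempty_of_lt h))).filter
          (fun u => degIn w (insert (pick w AP.1 (nonempty_of_lt h)) AP.2) u < δn)),
        insert (pick w AP.1 (nonempty_of_lt h)) AP.2)
    else (AP.1.erase (pick w AP.1 (nonempty_of_lt h)), AP.2)
  else AP

/-- the trajectory -/
noncomputable def pst (w : Fin m → Fin m → ℕ) (K δn : ℕ) (S : Finset (Fin m)) :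
    ℕ → Finset (Fin m) × Finset (Fin m)
  | 0 => (Finset.univ, ∅)
  | (k+1) => pstep w K δn S (pst w K δn S k)

variable (w : Fin m → Fin m → ℕ) (K δn : ℕ) (S : Finset (Fin m))

lemma pstep_stop {AP : Finset (Fin m) × Finset (Fin m)} (h : AP.1.card ≤ K) :
    pstep w K δn S AP = AP := dif_neg (by omega)

lemma pstep_cases (AP : Finset (Fin m) × Finset (Fin m)) :
    (AP.1.card ≤ K ∧ pstep w K δn S AP = AP) ∨
    (∃ (h : K < AP.1.card),
      (pick w AP.1 (nonempty_of_lt h) ∈ S ∧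
        pstep w K δn S AP =
          (((AP.1.erase (pick w AP.1 (nonempty_of_lt h))).filter
            (fun u => degIn w (insert (pick w AP.1 (nonempty_of_lt h)) AP.2) u < δn)),
            insert (pick w AP.1 (nonempty_of_lt h)) AP.2)) ∨
      (pick w AP.1 (nonempty_of_lt h) ∉ S ∧
        pstep w K δn S AP = (AP.1.erase (pick w AP.1 (nonempty_of_lt h)), AP.2))) := by
  by_cases h : K < AP.1.card
  · refine Or.inr ⟨h, ?_⟩
    by_cases hv : pick w AP.1 (nonempty_of_lt h) ∈ S
    · exact Or.inl ⟨hv, by rw [pstep, dif_pos h, if_pos hv]⟩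
    · exact Or.inr ⟨hv, by rw [pstep, dif_pos h, if_neg hv]⟩
  · exact Or.inl ⟨by omega, dif_neg h⟩

lemma pstep_A_subset (AP : Finset (Fin m) × Finset (Fin m)) :
    (pstep w K δn S AP).1 ⊆ AP.1 := by
  rcases pstep_cases w K δn S AP with ⟨_, h⟩ | ⟨h, ⟨_, heq⟩ | ⟨_, heq⟩⟩
  · rw [h]
  · rw [heq]
    exact (Finset.filter_subset _ _).trans (Finset.erase_subset _ _)
  · rw [heq]; exact Finset.erase_subset _ _

lemma pstep_P_subset (AP : Finset (Fin m) × Finset (Fin m)) :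
    AP.2 ⊆ (pstep w K δn S AP).2 := by
  rcases pstep_cases w K δn S AP with ⟨_, h⟩ | ⟨h, ⟨_, heq⟩ | ⟨_, heq⟩⟩
  · rw [h]
  · rw [heq]; exact Finset.subset_insert _ _
  · rw [heq]

lemma pst_A_mono : ∀ {j k : ℕ}, j ≤ k → (pst w K δn S k).1 ⊆ (pst w K δn S j).1 := by
  intro j k h
  induction k with
  | zero => cases Nat.le_zero.mp h; exact Finset.Subset.refl _
  | succ k ih =>
    rcases Nat.lt_or_ge j (k+1) with hj | hj
    · exact (pstep_A_subset w K δn S _).trans (ih (by omega))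
    · have : j = k + 1 := by omega
      subst this; exact Finset.Subset.refl _

lemma pst_P_mono : ∀ {j k : ℕ}, j ≤ k → (pst w K δn S j).2 ⊆ (pst w K δn S k).2 := by
  intro j k h
  induction k with
  | zero => cases Nat.le_zero.mp h; exact Finset.Subset.refl _
  | succ k ih =>
    rcases Nat.lt_or_ge j (k+1) with hj | hj
    · exact (ih (by omega)).trans (pstep_P_subset w K δn S _)
    · have : j = k + 1 := by omega
      subst this; exact Finset.Subset.refl _

lemma pst_P_sub_S : ∀ k, (pst w K δn S k).2 ⊆ S := by
  intro k
  induction k with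
  | zero => exact Finset.empty_subset _
  | succ k ih =>
    rcases pstep_cases w K δn S (pst w K δn S k) with ⟨_, h⟩ | ⟨h, ⟨hv, heq⟩ | ⟨_, heq⟩⟩
    · rw [pst, h]; exact ih
    · rw [pst, heq]; exact Finset.insert_subset hv ih
    · rw [pst, heq]; exact ih

lemma pst_AP_disj : ∀ k, ∀ u ∈ (pst w K δn S k).1, u ∉ (pst w K δn S k).2 := by
  intro k
  induction k with
  | zero => intro u _ hu; exact absurd hu (Finset.notMem_empty u)
  | succ k ih =>
    rcases pstep_cases w K δn S (pst w K δn S k) with ⟨_, h⟩ | ⟨h, ⟨hv, heq⟩ | ⟨_, heq⟩⟩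
    · rw [pst, h]; exact ih
    · rw [pst, heq]
      intro u hu
      simp only [Finset.mem_filter, Finset.mem_erase] at hu
      simp only [Finset.mem_insert]
      push_neg
      exact ⟨hu.1.1, ih u hu.1.2⟩
    · rw [pst, heq]
      intro u hu
      exact ih u (Finset.mem_of_mem_erase hu)

lemma pst_inv (hδ : 0 < δn) : ∀ k, ∀ u ∈ (pst w K δn S k).1, degIn w (pst w K δn S k).2 u < δn := by
  intro k
  induction k with
  | zero =>
    intro u _
    simp only [pst, degIn]
    rw [Finset.erase_empty, Finset.sum_empty]
    exact hδ
  | succ k ih =>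
    rcases pstep_cases w K δn S (pst w K δn S k) with ⟨_, h⟩ | ⟨h, ⟨hv, heq⟩ | ⟨_, heq⟩⟩
    · rw [pst, h]; exact ih
    · rw [pst, heq]
      intro u hu
      exact (Finset.mem_filter.1 hu).2
    · rw [pst, heq]
      intro u hu
      exact ih u (Finset.mem_of_mem_erase hu)

lemma pst_card_drop : ∀ k, (pst w K δn S k).1.card ≤ K ∨ (pst w K δn S k).1.card + k ≤ m := by
  intro k
  induction k with
  | zero =>
    right
    simp [pst]
  | succ k ih =>
    rcases pstep_cases w K δn S (pst w K δn S k) with ⟨hle, h⟩ | ⟨h, hcase⟩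
    · left; rw [pst, h]; exact hle
    · have hremoved : (pst w K δn S (k+1)).1 ⊆ (pst w K δn S k).1.erase
          (pick w (pst w K δn S k).1 (nonempty_of_lt h)) := by
        rcases hcase with ⟨_, heq⟩ | ⟨_, heq⟩
        · rw [pst, heq]; exact Finset.filter_subset _ _
        · rw [pst, heq]
      have hcard : (pst w K δn S (k+1)).1.card ≤ (pst w K δn S k).1.card - 1 := by
        calc (pst w K δn S (k+1)).1.card ≤ _ := Finset.card_le_card hremoved
        _ = (pst w K δn S k).1.card - 1 :=
          Finset.card_erase_of_mem (pick_mem _ _ _)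
      rcases ih with hK | hm
      · left; omega
      · right; omega

lemma pst_final_card : (pst w K δn S m).1.card ≤ K := by
  rcases pst_card_drop w K δn S m with h | h
  · exact h
  · omega

/-- vertex removed in some step before `M` -/
lemma exists_removal_step {M : ℕ} {v : Fin m} (hv0 : v ∈ (pst w K δn S 0).1)
    (hvM : v ∉ (pst w K δn S M).1) :
    ∃ k < M, v ∈ (pst w K δn S k).1 ∧ v ∉ (pst w K δn S (k+1)).1 := by
  induction M with
  | zero => exact absurd hv0 hvM
  | succ M ih =>
    by_cases hM : v ∈ (pst w K δn S M).1
    · exact ⟨M, Nat.lt_succ_self M, hM, hvM⟩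
    · obtain ⟨k, hk, h1, h2⟩ := ih hM
      exact ⟨k, by omega, h1, h2⟩

lemma pst_Pcard_step (k : ℕ) :
    (pst w K δn S (k+1)).2.card = (pst w K δn S k).2.card ∨
      ((pst w K δn S (k+1)).2.card = (pst w K δn S k).2.card + 1 ∧
        K < (pst w K δn S k).1.card) := by
  rcases pstep_cases w K δn S (pst w K δn S k) with ⟨_, h⟩ | ⟨h, ⟨hv, heq⟩ | ⟨_, heq⟩⟩
  · left; rw [pst, h]
  · right
    constructor
    · rw [pst, heq]
      exact Finset.card_insert_of_notMem
        (pst_AP_disj w K δn S k _ (pick_mem _ _ _))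
    · exact h
  · left; rw [pst, heq]

lemma pst_Pcard_mono {j k : ℕ} (h : j ≤ k) :
    (pst w K δn S j).2.card ≤ (pst w K δn S k).2.card :=
  Finset.card_le_card (pst_P_mono w K δn S h)

end Cont7

namespace Cont7

variable {m : ℕ} (w : Fin m → Fin m → ℕ) (K δn : ℕ) (S : Finset (Fin m))

noncomputable def psi (c : ℝ) (k : ℕ) : ℝ :=
  ∑ u ∈ (pst w K δn S k).1, (2*c - (degIn w (pst w K δn S k).2 u : ℝ))

section core

variable {c β : ℝ}

lemma drop_core (hsymm : ∀ u v, w u v = w v u)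
    (hcap : ∀ u v : Fin m, u ≠ v → (w u v : ℝ) ≤ c)
    (A P : Finset (Fin m)) (v : Fin m) (hv : v ∈ A)
    (hAP : ∀ u ∈ A, u ∉ P)
    (hinv : ∀ u ∈ A, (degIn w P u : ℝ) ≤ c) :
    (∑ u ∈ (A.erase v).filter (fun u => degIn w (insert v P) u < δn),
        (2*c - (degIn w (insert v P) u : ℝ)))
      ≤ (∑ u ∈ A, (2*c - (degIn w P u : ℝ))) - (degIn w A v : ℝ) := by
  classical
  have hvP : v ∉ P := hAP v hv
  have key : ∀ u ∈ A.erase v, (degIn w (insert v P) u : ℝ) = (degIn w P u : ℝ) + w u v := by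
    intro u hu
    obtain ⟨hne, huA⟩ := Finset.mem_erase.1 hu
    have h1 : (insert v P).erase u = insert v (P.erase u) :=
      Finset.erase_insert_of_ne hne.symm
    have h2 : v ∉ P.erase u := fun h => hvP (Finset.mem_of_mem_erase h)
    unfold degIn
    rw [h1, Finset.sum_insert h2]
    push_cast
    ring
  set p : Fin m → Prop := fun u => degIn w (insert v P) u < δn with hp
  have split2 :
      (∑ u ∈ A.erase v, (2*c - (degIn w P u : ℝ)))
        = (∑ u ∈ (A.erase v).filter p, (2*c - (degIn w P u : ℝ)))
          + (∑ u ∈ (A.erase v).filter (fun u => ¬ p u), (2*c - (degIn w P u : ℝ))) :=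
    (Finset.sum_filter_add_sum_filter_not _ _ _).symm
  have split1 :
      (∑ u ∈ A, (2*c - (degIn w P u : ℝ)))
        = (∑ u ∈ A.erase v, (2*c - (degIn w P u : ℝ))) + (2*c - (degIn w P v : ℝ)) :=
    (Finset.sum_erase_add A _ hv).symm
  have degsplit : (degIn w A v : ℝ)
      = (∑ u ∈ (A.erase v).filter p, (w u v : ℝ))
        + (∑ u ∈ (A.erase v).filter (fun u => ¬ p u), (w u v : ℝ)) := by
    have h3 : (degIn w A v : ℝ) = ∑ u ∈ A.erase v, (w u v : ℝ) := by
      unfold degIn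
      push_cast
      exact Finset.sum_congr rfl (fun u _ => by rw [hsymm v u])
    rw [h3]
    exact (Finset.sum_filter_add_sum_filter_not _ _ _).symm
  have hLHS :
      (∑ u ∈ (A.erase v).filter p, (2*c - (degIn w (insert v P) u : ℝ)))
        = (∑ u ∈ (A.erase v).filter p, (2*c - (degIn w P u : ℝ)))
          - (∑ u ∈ (A.erase v).filter p, (w u v : ℝ)) := by
    rw [← Finset.sum_sub_distrib]
    exact Finset.sum_congr rfl (fun u hu => by
      rw [key u (Finset.mem_of_mem_filter u hu)]; ring)
  have hO : (∑ u ∈ (A.erase v).filter (fun u => ¬ p u), (w u v : ℝ))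
      ≤ (∑ u ∈ (A.erase v).filter (fun u => ¬ p u), (2*c - (degIn w P u : ℝ))) := by
    apply Finset.sum_le_sum
    intro u hu
    have huA : u ∈ A.erase v := Finset.mem_of_mem_filter u hu
    obtain ⟨hne, huA'⟩ := Finset.mem_erase.1 huA
    have h1 : (w u v : ℝ) ≤ c := hcap u v hne
    have h2 : (degIn w P u : ℝ) ≤ c := hinv u huA'
    linarith
  have hvterm : 0 ≤ 2*c - (degIn w P v : ℝ) := by
    have := hinv v hv
    linarith
  rw [hLHS, split1, split2, degsplit]
  linarith

lemma inv_real (hδ : 0 < δn) (hδc : (δn : ℝ) ≤ c + 1) (k : ℕ) :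
    ∀ u ∈ (pst w K δn S k).1, (degIn w (pst w K δn S k).2 u : ℝ) ≤ c := by
  intro u hu
  have h1 := pst_inv w K δn S hδ k u hu
  have h2 : (degIn w (pst w K δn S k).2 u : ℝ) + 1 ≤ (δn : ℝ) := by
    exact_mod_cast Nat.succ_le_of_lt h1
  linarith

lemma psi_ge (hδ : 0 < δn) (hδc : (δn : ℝ) ≤ c + 1) (k : ℕ) :
    c * (pst w K δn S k).1.card ≤ psi w K δn S c k := by
  unfold psi
  calc c * ((pst w K δn S k).1.card : ℝ) = ∑ _u ∈ (pst w K δn S k).1, c := by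
        rw [Finset.sum_const, nsmul_eq_mul, mul_comm]
    _ ≤ _ := Finset.sum_le_sum (fun u hu => by
        have := inv_real w K δn S hδ hδc k u hu
        linarith)

lemma psi_le (k : ℕ) : psi w K δn S c k ≤ 2*c*(pst w K δn S k).1.card := by
  unfold psi
  calc (∑ u ∈ (pst w K δn S k).1, (2*c - (degIn w (pst w K δn S k).2 u : ℝ)))
      ≤ ∑ _u ∈ (pst w K δn S k).1, 2*c := Finset.sum_le_sum (fun u _ => by
        have : (0:ℝ) ≤ (degIn w (pst w K δn S k).2 u : ℝ) := Nat.cast_nonneg _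
        linarith)
    _ = 2*c*(pst w K δn S k).1.card := by rw [Finset.sum_const, nsmul_eq_mul, mul_comm]

lemma psi_step (hδ : 0 < δn) (hδc : (δn : ℝ) ≤ c + 1)
    (hsymm : ∀ u v, w u v = w v u)
    (hcap : ∀ u v : Fin m, u ≠ v → (w u v : ℝ) ≤ c) (k : ℕ) :
    psi w K δn S c (k+1) ≤ psi w K δn S c k ∧
      ((pst w K δn S (k+1)).2.card = (pst w K δn S k).2.card ∨
        (K < (pst w K δn S k).1.card ∧
          (pst w K δn S (k+1)).2.card = (pst w K δn S k).2.card + 1 ∧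
          ∃ v ∈ (pst w K δn S k).1,
            (∀ x ∈ (pst w K δn S k).1,
              degIn w (pst w K δn S k).1 x ≤ degIn w (pst w K δn S k).1 v) ∧
            psi w K δn S c (k+1) ≤ psi w K δn S c k
              - (degIn w (pst w K δn S k).1 v : ℝ))) := by
  rcases pstep_cases w K δn S (pst w K δn S k) with ⟨hle, h⟩ | ⟨h, ⟨hv, heq⟩ | ⟨hv, heq⟩⟩
  · have e : pst w K δn S (k+1) = pst w K δn S k := by rw [pst, h]
    constructor
    · apply le_of_eq; unfold psi; rw [e]
    · left; rw [e]
  · -- pick step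
    have e : pst w K δn S (k+1) =
        (((pst w K δn S k).1.erase (pick w (pst w K δn S k).1 (nonempty_of_lt h))).filter
          (fun u => degIn w (insert (pick w (pst w K δn S k).1 (nonempty_of_lt h))
            (pst w K δn S k).2) u < δn),
          insert (pick w (pst w K δn S k).1 (nonempty_of_lt h)) (pst w K δn S k).2) := by
      rw [pst, heq]
    have hdrop : psi w K δn S c (k+1) ≤ psi w K δn S c k
        - (degIn w (pst w K δn S k).1 (pick w (pst w K δn S k).1 (nonempty_of_lt h)) : ℝ) := by
      unfold psi
      rw [e]
      exact drop_core w δn hsymm hcap _ _ _ (pick_mem _ _ _)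
        (pst_AP_disj w K δn S k) (inv_real w K δn S hδ hδc k)
    refine ⟨?_, Or.inr ⟨h, ?_, pick w (pst w K δn S k).1 (nonempty_of_lt h),
      pick_mem _ _ _, pick_max _ _ _, hdrop⟩⟩
    · have : (0:ℝ) ≤ (degIn w (pst w K δn S k).1
          (pick w (pst w K δn S k).1 (nonempty_of_lt h)) : ℝ) := Nat.cast_nonneg _
      linarith
    · rw [e]
      exact Finset.card_insert_of_notMem (pst_AP_disj w K δn S k _ (pick_mem _ _ _))
  · -- non-pick step
    have e : pst w K δn S (k+1) =
        ((pst w K δn S k).1.erase (pick w (pst w K δn S k).1 (nonempty_of_lt h)),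
          (pst w K δn S k).2) := by
      rw [pst, heq]
    constructor
    · unfold psi
      rw [e]
      have hsplit := Finset.sum_erase_add (pst w K δn S k).1
        (fun u => 2*c - (degIn w (pst w K δn S k).2 u : ℝ)) (pick_mem w _ (nonempty_of_lt h))
      have hterm : 0 ≤ 2*c - (degIn w (pst w K δn S k).2
          (pick w (pst w K δn S k).1 (nonempty_of_lt h)) : ℝ) := by
        have := inv_real w K δn S hδ hδc k _ (pick_mem w _ (nonempty_of_lt h))
        linarith
      simp only at hsplit ⊢
      linarith
    · left; rw [e]

lemma psi_bound (hc : 0 < c) (hδ : 0 < δn) (hδc : (δn : ℝ) ≤ c + 1)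
    (hsymm : ∀ u v, w u v = w v u)
    (hcap : ∀ u v : Fin m, u ≠ v → (w u v : ℝ) ≤ c)
    (hβ0 : 0 ≤ β) (hβ2c : β ≤ 2*c)
    (hβ : ∀ A : Finset (Fin m), K < A.card → ∀ v ∈ A,
      (∀ x ∈ A, degIn w A x ≤ degIn w A v) → β * A.card ≤ (degIn w A v : ℝ)) :
    ∀ k, psi w K δn S c k ≤ 2*c*m*(1 - β/(2*c))^((pst w K δn S k).2.card) := by
  intro k
  induction k with
  | zero =>
    have e1 : (pst w K δn S 0) = ((Finset.univ : Finset (Fin m)), (∅ : Finset (Fin m))) := rfl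
    unfold psi
    rw [e1]
    simp only [degIn, Finset.erase_empty, Finset.sum_empty, Nat.cast_zero, sub_zero,
      Finset.sum_const, Finset.card_empty, pow_zero, mul_one, Finset.card_univ,
      Fintype.card_fin, nsmul_eq_mul]
    ring_nf
    exact le_refl _
  | succ k ih =>
    obtain ⟨hle, hcase⟩ := psi_step w K δn S hδ hδc hsymm hcap k
    have h1ρ : (0:ℝ) ≤ 1 - β/(2*c) := by
      rw [sub_nonneg]
      exact (div_le_one (by positivity)).mpr hβ2c
    rcases hcase with heq | ⟨hK, hcard, v, hvA, hvmax, hdrop⟩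
    · rw [heq]; exact hle.trans ih
    · have hA := hβ _ hK v hvA hvmax
      have hψle := psi_le w K δn S (c := c) k
      have hψge : 0 ≤ psi w K δn S c k := by
        have h0 := psi_ge w K δn S hδ hδc (c := c) k
        have : (0:ℝ) ≤ c * (pst w K δn S k).1.card := by positivity
        linarith
      have hstep : psi w K δn S c (k+1) ≤ (1 - β/(2*c)) * psi w K δn S c k := by
        have h2 : β/(2*c) * psi w K δn S c k ≤ β * ((pst w K δn S k).1.card : ℝ) := by
          have h3 := mul_le_mul_of_nonneg_left hψle (show (0:ℝ) ≤ β/(2*c) by positivity)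
          calc β/(2*c) * psi w K δn S c k
              ≤ β/(2*c) * (2*c*((pst w K δn S k).1.card : ℝ)) := h3
            _ = β * ((pst w K δn S k).1.card : ℝ) := by field_simp
        nlinarith
      calc psi w K δn S c (k+1) ≤ (1 - β/(2*c)) * psi w K δn S c k := hstep
        _ ≤ (1 - β/(2*c)) * (2*c*m*(1 - β/(2*c))^((pst w K δn S k).2.card)) :=
            mul_le_mul_of_nonneg_left ih h1ρ
        _ = 2*c*m*(1 - β/(2*c))^((pst w K δn S (k+1)).2.card) := by
            rw [hcard, pow_succ]; ring

lemma exists_pick_at : ∀ M : ℕ, 0 < (pst w K δn S M).2.card →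
    ∃ k, K < (pst w K δn S k).1.card ∧
      (pst w K δn S k).2.card + 1 = (pst w K δn S M).2.card := by
  intro M
  induction M with
  | zero =>
    intro h
    have : (pst w K δn S 0).2 = ∅ := rfl
    rw [this] at h
    simp at h
  | succ M ih =>
    intro h
    rcases pst_Pcard_step w K δn S M with heq | ⟨hcard, hK⟩
    · rw [heq] at h ⊢
      exact ih h
    · exact ⟨M, hK, by omega⟩

lemma key_ineq (hc : 0 < c) (hδ : 0 < δn) (hδc : (δn : ℝ) ≤ c + 1)
    (hsymm : ∀ u v, w u v = w v u)
    (hcap : ∀ u v : Fin m, u ≠ v → (w u v : ℝ) ≤ c)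
    (hβ0 : 0 ≤ β) (hβ2c : β ≤ 2*c)
    (hβ : ∀ A : Finset (Fin m), K < A.card → ∀ v ∈ A,
      (∀ x ∈ A, degIn w A x ≤ degIn w A v) → β * A.card ≤ (degIn w A v : ℝ))
    (M : ℕ) :
    (pst w K δn S M).2.card = 0 ∨
      ∃ p : ℕ, (pst w K δn S M).2.card = p + 1 ∧
        c * ((K : ℝ) + 1) ≤ 2*c*m*(1 - β/(2*c))^p := by
  rcases Nat.eq_zero_or_pos (pst w K δn S M).2.card with h0 | h0
  · exact Or.inl h0
  · right
    obtain ⟨k, hK, hcard⟩ := exists_pick_at w K δn S M h0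
    refine ⟨(pst w K δn S k).2.card, by omega, ?_⟩
    have h1 : ((K : ℝ) + 1) ≤ ((pst w K δn S k).1.card : ℝ) := by
      exact_mod_cast Nat.succ_le_of_lt hK
    calc c * ((K : ℝ) + 1) ≤ c * ((pst w K δn S k).1.card : ℝ) :=
          mul_le_mul_of_nonneg_left h1 hc.le
      _ ≤ psi w K δn S c k := psi_ge w K δn S hδ hδc k
      _ ≤ 2*c*m*(1 - β/(2*c))^((pst w K δn S k).2.card) :=
          psi_bound w K δn S hc hδ hδc hsymm hcap hβ0 hβ2c hβ k

end core

end Cont7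

namespace Cont7

variable {m : ℕ} (w : Fin m → Fin m → ℕ) (K δn : ℕ)

lemma pick_removed {AP : Finset (Fin m) × Finset (Fin m)} (S : Finset (Fin m))
    (h : K < AP.1.card) :
    pick w AP.1 (nonempty_of_lt h) ∉ (pstep w K δn S AP).1 := by
  rcases pstep_cases w K δn S AP with ⟨hle, _⟩ | ⟨h', ⟨_, heq⟩ | ⟨_, heq⟩⟩
  · omega
  · rw [heq]
    intro hmem
    have := Finset.mem_of_mem_filter _ hmem
    exact (Finset.notMem_erase _ _) this
  · rw [heq]
    exact Finset.notMem_erase _ _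

lemma replay (M : ℕ) (I : Finset (Fin m)) :
    ∀ k, k ≤ M → pst w K δn (I \ (pst w K δn I M).1) k = pst w K δn I k := by
  intro k
  induction k with
  | zero => intro _; rfl
  | succ k ih =>
    intro hk
    have e := ih (by omega)
    rw [pst, pst, e]
    set AP := pst w K δn I k with hAP
    by_cases h : K < AP.1.card
    · rw [pstep, dif_pos h, pstep, dif_pos h]
      set v := pick w AP.1 (nonempty_of_lt h) with hv
      have hrm : v ∉ (pst w K δn I (k+1)).1 := by
        rw [pst]
        exact pick_removed w K δn I h
      by_cases hvI : v ∈ I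
      · have hvT : v ∈ I \ (pst w K δn I M).1 :=
          Finset.mem_sdiff.2 ⟨hvI, fun hmem => hrm (pst_A_mono w K δn I hk hmem)⟩
        rw [if_pos hvI, if_pos hvT]
      · have hvT : v ∉ I \ (pst w K δn I M).1 := fun hT => hvI (Finset.mem_sdiff.1 hT).1
        rw [if_neg hvI, if_neg hvT]
    · rw [pstep, dif_neg h, pstep, dif_neg h]

lemma T_sub (I : Finset (Fin m)) (M : ℕ) :
    I \ (pst w K δn I M).1 ⊆
      (pst w K δn I M).2 ∪ I.filter (fun v => δn ≤ degIn w I v) := by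
  intro v hv
  obtain ⟨hvI, hvM⟩ := Finset.mem_sdiff.1 hv
  have hv0 : v ∈ (pst w K δn I 0).1 := Finset.mem_univ v
  obtain ⟨k, hkM, h1, h2⟩ := exists_removal_step w K δn I hv0 hvM
  rcases pstep_cases w K δn I (pst w K δn I k) with ⟨hle, h⟩ | ⟨h, ⟨hvm, heq⟩ | ⟨hvm, heq⟩⟩
  · exfalso
    rw [pst, h] at h2
    exact h2 h1
  · -- pick branch
    set vm := pick w (pst w K δn I k).1 (nonempty_of_lt h) with hvmdef
    rw [pst, heq] at h2
    by_cases hvv : v = vm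
    · apply Finset.mem_union_left
      have : v ∈ (pst w K δn I (k+1)).2 := by
        rw [pst, heq, hvv]
        exact Finset.mem_insert_self _ _
      exact pst_P_mono w K δn I hkM this
    · apply Finset.mem_union_right
      have hve : v ∈ (pst w K δn I k).1.erase vm := Finset.mem_erase.2 ⟨hvv, h1⟩
      have hnp : ¬ (degIn w (insert vm (pst w K δn I k).2) v < δn) := by
        intro hp
        exact h2 (Finset.mem_filter.2 ⟨hve, hp⟩)
      push_neg at hnp
      refine Finset.mem_filter.2 ⟨hvI, ?_⟩
      refine le_trans hnp (degIn_mono w ?_ v)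
      exact Finset.insert_subset hvm (pst_P_sub_S w K δn I k)
  · -- non-pick branch
    exfalso
    rw [pst, heq] at h2
    have : v = pick w (pst w K δn I k).1 (nonempty_of_lt h) := by
      by_contra hne
      exact h2 (Finset.mem_erase.2 ⟨hne, h1⟩)
    rw [← this] at hvm
    exact hvm hvI

end Cont7

namespace Cont7

open Finset

variable {m : ℕ}

/-- indicator of adjacency -/
noncomputable def chi (F : SimpleGraph (Fin m)) (u x : Fin m) : ℕ :=
  by classical exact if F.Adj u x then 1 else 0

/-- codegree weight -/
noncomputable def wgt (F : SimpleGraph (Fin m)) (u v : Fin m) : ℕ :=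
  ∑ x : Fin m, chi F u x * chi F v x

lemma wgt_symm (F : SimpleGraph (Fin m)) (u v : Fin m) : wgt F u v = wgt F v u := by
  unfold wgt
  exact Finset.sum_congr rfl (fun x _ => mul_comm _ _)

lemma wgt_eq_card (F : SimpleGraph (Fin m)) (u v : Fin m) :
    wgt F u v = Nat.card ↥(F.neighborSet u ∩ F.neighborSet v) := by
  classical
  have h1 : (F.neighborSet u ∩ F.neighborSet v) = {x : Fin m | F.Adj u x ∧ F.Adj v x} := by
    ext x
    simp [SimpleGraph.mem_neighborSet, Set.mem_inter_iff]
  rw [h1, Nat.card_eq_fintype_card, Fintype.card_subtype]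
  rw [Finset.card_filter]
  unfold wgt chi
  apply Finset.sum_congr rfl
  intro x _
  by_cases ha : F.Adj u x <;> by_cases hb : F.Adj v x <;> simp [ha, hb]

lemma ndeg_eq_sum (F : SimpleGraph (Fin m)) (u : Fin m) :
    ndeg F u = ∑ x : Fin m, chi F u x := by
  classical
  have h1 : (F.neighborSet u) = {x : Fin m | F.Adj u x} := by
    ext x; simp [SimpleGraph.mem_neighborSet]
  unfold ndeg
  rw [h1, Nat.card_eq_fintype_card, Fintype.card_subtype, Finset.card_filter]
  unfold chi
  apply Finset.sum_congr rfl
  intro x _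
  by_cases ha : F.Adj u x <;> simp [ha]

lemma supersat (F : SimpleGraph (Fin m)) (n d : ℕ)
    (hmn : (m : ℝ) ≤ n) (hn1 : (1:ℝ) ≤ n)
    (hdeg : ∀ u, (d : ℝ) - 1 ≤ (ndeg F u : ℝ))
    (hd100 : (100 : ℝ) ≤ d)
    (K : ℕ) (hK : 4*(n:ℝ)/d ≤ (K : ℝ)) :
    ∀ A : Finset (Fin m), K < A.card → ∀ v ∈ A,
      (∀ x ∈ A, degIn (wgt F) A x ≤ degIn (wgt F) A v) →
      ((7/10) * ((d:ℝ)-1)^2/n) * A.card ≤ (degIn (wgt F) A v : ℝ) := by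
  classical
  intro A hA v hvA hmax
  have hd0 : (0:ℝ) < d := by linarith
  have hn0 : (0:ℝ) < n := by linarith
  set a : ℝ := (A.card : ℝ) with ha_def
  have haK : (K:ℝ) + 1 ≤ a := by
    have h : ((K+1 : ℕ) : ℝ) ≤ ((A.card : ℕ) : ℝ) :=
      Nat.cast_le.mpr (Nat.succ_le_of_lt hA)
    push_cast at h
    linarith
  have ha : 4*(n:ℝ)/d < a := by linarith
  have ha0 : (0:ℝ) < a := by
    have : (0:ℝ) ≤ (K:ℝ) := Nat.cast_nonneg K
    linarith
  have ham : a ≤ (m:ℝ) := by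
    have h := Finset.card_le_card (Finset.subset_univ A)
    rw [Finset.card_univ, Fintype.card_fin] at h
    exact_mod_cast Nat.cast_le.mpr h
  have hm0 : (0:ℝ) < m := lt_of_lt_of_le ha0 ham
  set g : Fin m → Fin m → ℝ := fun u x => ((chi F u x : ℕ) : ℝ) with hg_def
  set Y : Fin m → ℝ := fun x => ∑ u ∈ A, g u x with hY_def
  have hgsq : ∀ u x, g u x * g u x = g u x := by
    intro u x
    simp only [hg_def, chi]
    by_cases h : F.Adj u x <;> simp [h]
  -- sum of degIn over A equals ∑ x (Y x ^2 - Y x)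
  have hsum_deg : ∑ u ∈ A, (degIn (wgt F) A u : ℝ) = ∑ x : Fin m, (Y x^2 - Y x) := by
    have step1 : ∀ u ∈ A, (degIn (wgt F) A u : ℝ)
        = ∑ x : Fin m, (g u x * Y x - g u x) := by
      intro u hu
      unfold degIn wgt
      push_cast
      rw [Finset.sum_comm]
      apply Finset.sum_congr rfl
      intro x _
      have herase : ∑ v' ∈ A.erase u, g v' x = Y x - g u x := by
        rw [hY_def]
        exact Finset.sum_erase_eq_sub hu
      calc ∑ v' ∈ A.erase u, g u x * g v' x = g u x * ∑ v' ∈ A.erase u, g v' x := by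
            rw [Finset.mul_sum]
        _ = g u x * (Y x - g u x) := by rw [herase]
        _ = g u x * Y x - g u x := by rw [mul_sub, hgsq]
    rw [Finset.sum_congr rfl step1, Finset.sum_comm]
    apply Finset.sum_congr rfl
    intro x _
    rw [Finset.sum_sub_distrib, ← Finset.sum_mul]
    have : ∑ u ∈ A, g u x = Y x := rfl
    rw [this]
    ring
  set Sv : ℝ := ∑ u ∈ A, ((ndeg F u : ℕ) : ℝ) with hSv_def
  have hSY : ∑ x : Fin m, Y x = Sv := by
    rw [hSv_def]
    rw [Finset.sum_comm]
    apply Finset.sum_congr rfl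
    intro u _
    rw [ndeg_eq_sum]
    push_cast
    rfl
  have hSa : a * ((d:ℝ)-1) ≤ Sv := by
    rw [hSv_def]
    calc a * ((d:ℝ)-1) = ∑ _u ∈ A, ((d:ℝ)-1) := by
          rw [Finset.sum_const, nsmul_eq_mul]
      _ ≤ ∑ u ∈ A, ((ndeg F u : ℕ) : ℝ) := Finset.sum_le_sum (fun u _ => hdeg u)
  have hCS : Sv^2 ≤ (m:ℝ) * ∑ x : Fin m, (Y x)^2 := by
    have h := sq_sum_le_card_mul_sum_sq (s := (Finset.univ : Finset (Fin m))) (f := Y)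
    rw [Finset.card_univ, Fintype.card_fin, hSY] at h
    exact_mod_cast h
  set D : ℝ := (degIn (wgt F) A v : ℝ) with hD_def
  have hmax' : ∑ u ∈ A, (degIn (wgt F) A u : ℝ) ≤ a * D := by
    calc ∑ u ∈ A, (degIn (wgt F) A u : ℝ) ≤ ∑ _u ∈ A, D :=
          Finset.sum_le_sum (fun u hu => by
            rw [hD_def]
            exact_mod_cast Nat.cast_le.mpr (hmax u hu))
      _ = a * D := by rw [Finset.sum_const, nsmul_eq_mul]
  have hD0 : (0:ℝ) ≤ D := Nat.cast_nonneg _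
  have key1 : Sv^2 - (m:ℝ)*Sv ≤ (m:ℝ)*(a*D) := by
    have h1 : ∑ x : Fin m, (Y x^2 - Y x) ≤ a * D := by rw [← hsum_deg]; exact hmax'
    have h2 : (∑ x : Fin m, (Y x)^2) - Sv ≤ a * D := by
      rw [← hSY, ← Finset.sum_sub_distrib]
      exact le_trans (le_of_eq (Finset.sum_congr rfl (fun x _ => by ring))) h1
    have h3 := mul_le_mul_of_nonneg_left h2 hm0.le
    linarith
  have hSn : (396/100) * (n:ℝ) ≤ Sv := by
    have h1 : 4*(n:ℝ)/d * ((d:ℝ)-1) ≤ a * ((d:ℝ)-1) := by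
      apply mul_le_mul_of_nonneg_right ha.le
      linarith
    have h2 : (396/100) * (n:ℝ) ≤ 4*(n:ℝ)/d * ((d:ℝ)-1) := by
      have e : 4*(n:ℝ)/d * ((d:ℝ)-1) = (n:ℝ)*(4*((d:ℝ)-1))/d := by ring
      rw [e, le_div_iff₀ hd0]
      have h3 : (0:ℝ) ≤ (n:ℝ) * ((4/100)*(d:ℝ) - 4) :=
        mul_nonneg hn0.le (by linarith)
      nlinarith
    linarith
  have hSv0 : (0:ℝ) ≤ Sv := by
    have : (0:ℝ) ≤ (396/100) * (n:ℝ) := by positivity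
    linarith
  have key2 : (74/100)*Sv^2 ≤ Sv^2 - (m:ℝ)*Sv := by
    have h1 : (m:ℝ) ≤ (100/396) * Sv := by linarith
    have h2 : (m:ℝ)*Sv ≤ (100/396) * Sv * Sv := mul_le_mul_of_nonneg_right h1 hSv0
    have e : Sv * Sv = Sv^2 := by ring
    have := sq_nonneg Sv
    linarith
  have key3 : a^2*((d:ℝ)-1)^2 ≤ Sv^2 := by
    have h0 : (0:ℝ) ≤ a * ((d:ℝ)-1) := mul_nonneg ha0.le (by linarith)
    have e1 : a^2*((d:ℝ)-1)^2 = (a*((d:ℝ)-1))*(a*((d:ℝ)-1)) := by ring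
    have e2 : Sv*Sv = Sv^2 := by ring
    have h3 := mul_self_le_mul_self h0 hSa
    linarith
  have final : (74/100) * (a^2 * ((d:ℝ)-1)^2) ≤ (n:ℝ)*(a*D) := by
    have h1 : (m:ℝ)*(a*D) ≤ (n:ℝ)*(a*D) := by
      apply mul_le_mul_of_nonneg_right hmn
      positivity
    have e1 : (74/100)*(a^2*((d:ℝ)-1)^2) ≤ (74/100)*Sv^2 := by linarith
    linarith
  rw [div_mul_eq_mul_div, div_le_iff₀ hn0]
  have hfin2 : ((7/10)*((d:ℝ)-1)^2*a) * a ≤ (D*(n:ℝ)) * a := by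
    have hsq : (0:ℝ) ≤ a^2 * ((d:ℝ)-1)^2 := by positivity
    have e1 : ((7/10)*((d:ℝ)-1)^2*a) * a = (7/10)*(a^2*((d:ℝ)-1)^2) := by ring
    have e2 : (D*(n:ℝ)) * a = (n:ℝ)*(a*D) := by ring
    rw [e1, e2]
    linarith
  have := le_of_mul_le_mul_right hfin2 ha0
  linarith
end Cont7

namespace Cont7

open Finset

lemma sum_offDiag {m : ℕ} (I : Finset (Fin m)) (f : Fin m → Fin m → ℝ) :
    ∑ p ∈ I.offDiag, f p.1 p.2 = ∑ v ∈ I, ∑ t ∈ I.erase v, f v t := by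
  classical
  have h1 : I.offDiag = (I ×ˢ I).filter (fun p => p.1 ≠ p.2) := by
    ext p; simp [Finset.mem_offDiag, and_assoc]
  rw [h1, Finset.sum_filter, Finset.sum_product]
  apply Finset.sum_congr rfl
  intro v _
  rw [← Finset.filter_ne' I v, Finset.sum_filter]
  apply Finset.sum_congr rfl
  intro t _
  by_cases h : v = t <;> simp [h, Ne, eq_comm]

lemma numeric (n : ℕ) (hn : 2^100 ≤ n) :
    100 ≤ Real.logb 2 n ∧ 23 * (Real.logb 2 n)^4 ≤ Real.sqrt n := by
  have hn1 : (1:ℝ) ≤ (n:ℝ) := by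
    have h : (1:ℕ) ≤ n := le_trans (by norm_num) hn
    exact_mod_cast h
  have hnR : ((2:ℝ)^(100:ℕ)) ≤ (n:ℝ) := by exact_mod_cast hn
  have hn0 : (0:ℝ) < n := by linarith
  set ℓ := Real.logb 2 n with hℓdef
  have hℓ100 : 100 ≤ ℓ := by
    have h1 : Real.logb 2 ((2:ℝ)^(100:ℕ)) = 100 := by
      rw [Real.logb_pow, Real.logb_self_eq_one (by norm_num)]
      norm_num
    have h2 := Real.logb_le_logb_of_le (by norm_num : (1:ℝ) < 2) (by positivity) hnR
    rw [h1] at h2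
    exact h2
  refine ⟨hℓ100, ?_⟩
  set x := (n:ℝ) ^ ((1:ℝ)/16) with hx
  have hx0 : (0:ℝ) < x := Real.rpow_pos_of_pos hn0 _
  have hlog : Real.log n ≤ 16 * x := by
    have h := Real.log_le_rpow_div (x := (n:ℝ)) (Nat.cast_nonneg n)
      (show (0:ℝ) < 1/16 by norm_num)
    have e : (n:ℝ)^((1:ℝ)/16)/(1/16) = 16*x := by rw [hx]; ring
    rw [e] at h
    exact h
  have hℓx : ℓ ≤ 24 * x := by
    have hlog2 : (0.6931471803:ℝ) < Real.log 2 := Real.log_two_gt_d9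
    have hlog2pos : (0:ℝ) < Real.log 2 := by linarith
    rw [hℓdef, Real.logb, div_le_iff₀ hlog2pos]
    have hxnn : (0:ℝ) ≤ x := hx0.le
    have hm := mul_le_mul_of_nonneg_left hlog2.le (show (0:ℝ) ≤ 24*x by positivity)
    linarith
  have hx4 : (2:ℝ)^(25:ℕ) ≤ x^(4:ℕ) := by
    have h1 : ((2:ℝ)^(100:ℕ))^((1:ℝ)/4) ≤ (n:ℝ)^((1:ℝ)/4) :=
      Real.rpow_le_rpow (by positivity) hnR (by norm_num)
    have h2 : ((2:ℝ)^(100:ℕ))^((1:ℝ)/4) = (2:ℝ)^(25:ℕ) := by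
      rw [← Real.rpow_natCast 2 100, ← Real.rpow_mul (by norm_num : (0:ℝ) ≤ 2),
        ← Real.rpow_natCast 2 25]
      norm_num
    have h3 : x^(4:ℕ) = (n:ℝ)^((1:ℝ)/4) := by
      rw [hx, ← Real.rpow_natCast ((n:ℝ)^((1:ℝ)/16)) 4,
        ← Real.rpow_mul (Nat.cast_nonneg n)]
      norm_num
    rw [h3, ← h2]
    exact h1
  have hx8 : x^(8:ℕ) = Real.sqrt n := by
    rw [hx, ← Real.rpow_natCast ((n:ℝ)^((1:ℝ)/16)) 8, ← Real.rpow_mul (Nat.cast_nonneg n),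
      Real.sqrt_eq_rpow]
    norm_num
  have hℓ0 : (0:ℝ) ≤ ℓ := by linarith
  have hℓ4 : ℓ^4 ≤ 331776 * x^(4:ℕ) := by
    have h := pow_le_pow_left₀ hℓ0 hℓx 4
    have e : (24*x)^4 = 331776 * x^(4:ℕ) := by ring
    rw [e] at h
    exact h
  have hx4nn : (0:ℝ) ≤ x^(4:ℕ) := by positivity
  have h1 : (23:ℝ) * (331776 * x^(4:ℕ)) ≤ (2:ℝ)^(25:ℕ) * x^(4:ℕ) := by
    have h2 : (23:ℝ)*331776 ≤ (2:ℝ)^(25:ℕ) := by norm_num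
    have := mul_le_mul_of_nonneg_right h2 hx4nn
    linarith
  have h2 : (2:ℝ)^(25:ℕ) * x^(4:ℕ) ≤ x^(4:ℕ) * x^(4:ℕ) :=
    mul_le_mul_of_nonneg_right hx4 hx4nn
  have h3 : x^(4:ℕ) * x^(4:ℕ) = x^(8:ℕ) := by ring
  have h4 : 23 * ℓ^4 ≤ 23 * (331776 * x^(4:ℕ)) := by linarith
  rw [← hx8]
  linarith

end Cont7


set_option maxHeartbeats 4000000 in
/-- Certificate lemma for graphs with few 4-cycles.  With `b = 16 log⁴ n` and
`g = 32 log⁵ n`: for all sufficiently large `n`, all `m ≤ n - 1` and `√n/log n ≤ d ≤ 2√n`,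
and every `m`-vertex graph `F` with minimum degree at least `d - 1` in which every two
distinct vertices have at most `√n/b` common neighbors, there is a container function `C`
such that every `I ⊆ V(F)` with `|I| = d` and `e(F²[I]) ≤ n/g` has a fingerprint
`T ⊆ I ⊆ C T` with `|T| ≤ 2√n/log n` and `|C T| ≤ 5n/d`. -/
theorem statement_7 :
    ∃ n₀ : ℕ, ∀ n : ℕ, n₀ ≤ n →
      ∀ m d : ℕ, m ≤ n - 1 →
        Real.sqrt n / Real.logb 2 n ≤ (d : ℝ) → (d : ℝ) ≤ 2 * Real.sqrt n →
        ∀ F : SimpleGraph (Fin m),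
          (∀ w, (d : ℝ) - 1 ≤ (ndeg F w : ℝ)) →
          (∀ u v : Fin m, u ≠ v →
            (Nat.card ↥(F.neighborSet u ∩ F.neighborSet v) : ℝ) ≤
              Real.sqrt n / (16 * Real.logb 2 n ^ 4)) →
          ∃ C : Finset (Fin m) → Finset (Fin m),
            ∀ I : Finset (Fin m), I.card = d →
              eSquare F I ≤ (n : ℝ) / (32 * Real.logb 2 n ^ 5) →
              ∃ T : Finset (Fin m), T ⊆ I ∧ I ⊆ C T ∧
                (T.card : ℝ) ≤ 2 * Real.sqrt n / Real.logb 2 n ∧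
                ((C T).card : ℝ) ≤ 5 * n / d := by
  classical
  refine ⟨2^100, ?_⟩
  intro n hn m d hm hd1 hd2 F hdeg hcap
  obtain ⟨hℓ100, hgrow⟩ := Cont7.numeric n hn
  have hn1 : (1:ℝ) ≤ (n:ℝ) := by
    have h : (1:ℕ) ≤ n := le_trans (by norm_num) hn
    exact_mod_cast h
  clear hn
  set ℓ := Real.logb 2 n with hℓdef
  set r := Real.sqrt n with hrdef
  have hn0 : (0:ℝ) < (n:ℝ) := by linarith
  have hr0 : (0:ℝ) < r := Real.sqrt_pos.mpr hn0
  have hrsq : r * r = (n:ℝ) := Real.mul_self_sqrt (Nat.cast_nonneg n)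
  have hℓ0 : (0:ℝ) < ℓ := lt_of_lt_of_le (by norm_num) hℓ100
  clear_value ℓ r
  have hrl : 100 * ℓ ≤ r := by
    have hcube : (100:ℝ)^3 ≤ ℓ^3 := pow_le_pow_left₀ (by norm_num) hℓ100 3
    have h2 : 100^3*ℓ ≤ ℓ^3*ℓ := mul_le_mul_of_nonneg_right hcube hℓ0.le
    have e : ℓ^3*ℓ = ℓ^4 := by ring
    linarith
  have hrl100 : (100:ℝ) ≤ r/ℓ := (le_div_iff₀ hℓ0).mpr (by linarith)
  have hd100 : (100:ℝ) ≤ (d:ℝ) := le_trans hrl100 hd1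
  have hd0 : (0:ℝ) < (d:ℝ) := by linarith
  have hdnat : 0 < d := by exact_mod_cast hd0
  have hmn : (m:ℝ) ≤ (n:ℝ) := by
    have h1 : m ≤ n := le_trans hm (Nat.sub_le n 1)
    exact_mod_cast h1
  set c := r / (16 * ℓ ^ 4) with hcdef
  have hc0 : (0:ℝ) < c := by
    rw [hcdef]
    exact div_pos hr0 (mul_pos (by norm_num) (pow_pos hℓ0 4))
  have hc2316 : (23:ℝ)/16 ≤ c := by
    rw [hcdef, le_div_iff₀ (mul_pos (by norm_num : (0:ℝ) < 16) (pow_pos hℓ0 4))]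
    linarith [hgrow]
  clear_value c
  set δn := ⌊c⌋₊ + 1 with hδdef
  have hδpos : 0 < δn := Nat.succ_pos _
  have hδc : (δn:ℝ) ≤ c + 1 := by
    rw [hδdef]
    push_cast
    have := Nat.floor_le hc0.le
    linarith
  have hcδ : c ≤ (δn:ℝ) := by
    rw [hδdef]
    push_cast
    have := Nat.lt_floor_add_one c
    linarith
  clear_value δn
  set K := 4*n/d + 1 with hKdef
  have hKR : (K:ℝ) = ((4*n/d : ℕ):ℝ) + 1 := by rw [hKdef]; push_cast; ring
  have hK4 : 4*(n:ℝ)/(d:ℝ) ≤ (K:ℝ) := by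
    have h1 := Nat.div_add_mod (4*n) d
    have h2 : (4*n) % d < d := Nat.mod_lt _ hdnat
    have h1R : (d:ℝ) * ((4*n/d : ℕ):ℝ) + (((4*n) % d : ℕ):ℝ) = 4*(n:ℝ) := by
      exact_mod_cast h1
    have h2R : (((4*n)%d : ℕ):ℝ) < (d:ℝ) := by exact_mod_cast h2
    rw [div_le_iff₀ hd0, hKR]
    have e : (((4*n/d : ℕ):ℝ)+1)*(d:ℝ) = (d:ℝ)*((4*n/d : ℕ):ℝ) + (d:ℝ) := by ring
    linarith [h1R, h2R, e]
  have hKle : (K:ℝ) ≤ 4*(n:ℝ)/(d:ℝ) + 1 := by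
    have h1 : ((4*n/d : ℕ):ℝ) ≤ (((4*n : ℕ)):ℝ)/(d:ℝ) := Nat.cast_div_le
    rw [hKR]
    push_cast at h1
    linarith
  clear_value K
  have hcap' : ∀ u v : Fin m, u ≠ v → ((Cont7.wgt F u v : ℕ):ℝ) ≤ c := by
    intro u v huv
    rw [Cont7.wgt_eq_card]
    exact hcap u v huv
  have hsymm := Cont7.wgt_symm F
  have hβ := Cont7.supersat F n d hmn hn1 hdeg hd100 K hK4
  set β := (7:ℝ)/10 * ((d:ℝ)-1)^2 / (n:ℝ) with hβdef
  have hd1pos : (0:ℝ) < (d:ℝ) - 1 := by linarith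
  have hβpos : (0:ℝ) < β := by
    rw [hβdef]
    apply div_pos _ hn0
    exact mul_pos (by norm_num) (pow_pos hd1pos 2)
  have hd2r : (d:ℝ) ≤ 2*r := hd2
  have hβ2c : β ≤ 2*c := by
    have h1 : ((d:ℝ)-1)^2 ≤ 4*(n:ℝ) := by
      have e1 : ((d:ℝ))^2 ≤ (2*r)^2 := pow_le_pow_left₀ hd0.le hd2r 2
      have e2 : (2*r)^2 = 4*(n:ℝ) := by rw [← hrsq]; ring
      have e3 : ((d:ℝ)-1)^2 ≤ ((d:ℝ))^2 := pow_le_pow_left₀ (by linarith) (by linarith) 2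
      linarith
    have h2 : β ≤ 28/10 := by
      rw [hβdef, div_le_iff₀ hn0]
      linarith
    linarith
  clear_value β
  -- the container function
  refine ⟨fun T => T ∪ (Cont7.pst (Cont7.wgt F) K δn T m).1, ?_⟩
  intro I hIcard hIes
  set T := I \ (Cont7.pst (Cont7.wgt F) K δn I m).1 with hTdef
  have hreplay := Cont7.replay (Cont7.wgt F) K δn m I m le_rfl
  rw [← hTdef] at hreplay
  have hTI : T ⊆ I := Finset.sdiff_subset
  have hICT : I ⊆ T ∪ (Cont7.pst (Cont7.wgt F) K δn T m).1 := by
    intro v hv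
    by_cases hvA : v ∈ (Cont7.pst (Cont7.wgt F) K δn I m).1
    · apply Finset.mem_union_right
      rw [hreplay]
      exact hvA
    · exact Finset.mem_union_left _ (Finset.mem_sdiff.2 ⟨hv, hvA⟩)
  -- fingerprint decomposition
  have hcardT : (T.card : ℝ) ≤ ((Cont7.pst (Cont7.wgt F) K δn I m).2.card : ℝ)
      + ((I.filter (fun v => δn ≤ Cont7.degIn (Cont7.wgt F) I v)).card : ℝ) := by
    have h1 := Finset.card_le_card (Cont7.T_sub (Cont7.wgt F) K δn I m)
    have h2 := Finset.card_union_le (Cont7.pst (Cont7.wgt F) K δn I m).2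
      (I.filter (fun v => δn ≤ Cont7.degIn (Cont7.wgt F) I v))
    rw [← hTdef] at h1
    exact_mod_cast le_trans h1 h2
  -- total F²-degree of I
  have hEtot : ∑ v ∈ I, ((Cont7.degIn (Cont7.wgt F) I v : ℕ):ℝ) = 2 * eSquare F I := by
    have h1 : ∑ p ∈ I.offDiag, ((Nat.card ↥(F.neighborSet p.1 ∩ F.neighborSet p.2) : ℕ):ℝ)
        = ∑ v ∈ I, ∑ t ∈ I.erase v, ((Cont7.wgt F v t : ℕ):ℝ) := by
      calc ∑ p ∈ I.offDiag, ((Nat.card ↥(F.neighborSet p.1 ∩ F.neighborSet p.2) : ℕ):ℝ)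
          = ∑ p ∈ I.offDiag, (fun a b => ((Cont7.wgt F a b : ℕ):ℝ)) p.1 p.2 :=
            Finset.sum_congr rfl (fun p _ => by simp only [Cont7.wgt_eq_card])
        _ = ∑ v ∈ I, ∑ t ∈ I.erase v, ((Cont7.wgt F v t : ℕ):ℝ) :=
            Cont7.sum_offDiag I (fun a b => ((Cont7.wgt F a b : ℕ):ℝ))
    rw [eSquare]
    rw [h1]
    have h2 : ∀ v ∈ I, ((Cont7.degIn (Cont7.wgt F) I v : ℕ):ℝ)
        = ∑ t ∈ I.erase v, ((Cont7.wgt F v t : ℕ):ℝ) := by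
      intro v _
      unfold Cont7.degIn
      push_cast
      rfl
    rw [Finset.sum_congr rfl h2]
    ring
  have hES2 : ∑ v ∈ I, ((Cont7.degIn (Cont7.wgt F) I v : ℕ):ℝ) ≤ (n:ℝ)/(16*ℓ^5) := by
    rw [hEtot]
    have e : (n:ℝ)/(16*ℓ^5) = 2*((n:ℝ)/(32*ℓ^5)) := by ring
    rw [e]
    linarith
  -- Markov bound on B
  have hBcard : ((I.filter (fun v => δn ≤ Cont7.degIn (Cont7.wgt F) I v)).card : ℝ) ≤ r/ℓ := by
    have h1 : (I.filter (fun v => δn ≤ Cont7.degIn (Cont7.wgt F) I v)).card * δn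
        ≤ ∑ v ∈ I, Cont7.degIn (Cont7.wgt F) I v := by
      calc (I.filter (fun v => δn ≤ Cont7.degIn (Cont7.wgt F) I v)).card * δn
          = ∑ _v ∈ I.filter (fun v => δn ≤ Cont7.degIn (Cont7.wgt F) I v), δn := by
            rw [Finset.sum_const, smul_eq_mul]
        _ ≤ ∑ v ∈ I.filter (fun v => δn ≤ Cont7.degIn (Cont7.wgt F) I v),
              Cont7.degIn (Cont7.wgt F) I v :=
            Finset.sum_le_sum (fun v hv => (Finset.mem_filter.1 hv).2)
        _ ≤ ∑ v ∈ I, Cont7.degIn (Cont7.wgt F) I v :=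
            Finset.sum_le_sum_of_subset (Finset.filter_subset _ _)
    have h1R : ((I.filter (fun v => δn ≤ Cont7.degIn (Cont7.wgt F) I v)).card : ℝ) * (δn:ℝ)
        ≤ ∑ v ∈ I, ((Cont7.degIn (Cont7.wgt F) I v : ℕ):ℝ) := by
      exact_mod_cast h1
    have h2 : ((I.filter (fun v => δn ≤ Cont7.degIn (Cont7.wgt F) I v)).card : ℝ) * c
        ≤ (n:ℝ)/(16*ℓ^5) := by
      have hcnn : (0:ℝ) ≤ ((I.filter (fun v => δn ≤ Cont7.degIn (Cont7.wgt F) I v)).card : ℝ) :=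
        Nat.cast_nonneg _
      have h3 : ((I.filter (fun v => δn ≤ Cont7.degIn (Cont7.wgt F) I v)).card : ℝ) * c
          ≤ ((I.filter (fun v => δn ≤ Cont7.degIn (Cont7.wgt F) I v)).card : ℝ) * (δn:ℝ) :=
        mul_le_mul_of_nonneg_left hcδ hcnn
      linarith [hES2, h1R]
    have h3 : (n:ℝ)/(16*ℓ^5) = (r/ℓ) * c := by
      have hℓne : ℓ ≠ 0 := ne_of_gt hℓ0
      rw [hcdef, ← hrsq]
      field_simp
    rw [h3] at h2
    exact le_of_mul_le_mul_right h2 hc0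
  -- pick count bound
  have hkey := Cont7.key_ineq (Cont7.wgt F) K δn I hc0 hδpos hδc hsymm hcap'
    hβpos.le hβ2c hβ m
  have hPm : (((Cont7.pst (Cont7.wgt F) K δn I m).2.card):ℝ) ≤ 1 + (35/548)*(r/ℓ) := by
    rcases hkey with h0 | ⟨p, hp, hineq⟩
    · rw [h0]
      have hrlnn : (0:ℝ) ≤ r/ℓ := div_nonneg hr0.le hℓ0.le
      norm_num
      linarith
    · set ρ := β/(2*c) with hρdef
      have hρ0 : (0:ℝ) < ρ := by
        rw [hρdef]
        exact div_pos hβpos (by linarith)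
      have hρ1 : ρ ≤ 1 := by
        rw [hρdef]
        exact (div_le_one (by linarith)).mpr hβ2c
      clear_value ρ
      have hexp1 : (1 - ρ) ≤ Real.exp (-ρ) := by
        have := Real.add_one_le_exp (-ρ)
        linarith
      have hexp : (1-ρ)^p ≤ Real.exp (-(ρ*(p:ℝ))) := by
        calc (1-ρ)^p ≤ (Real.exp (-ρ))^p := pow_le_pow_left₀ (by linarith) hexp1 p
          _ = Real.exp (-(ρ*(p:ℝ))) := by
              rw [← Real.exp_nat_mul]
              congr 1
              ring
      have h1 : (K:ℝ)+1 ≤ 2*(n:ℝ)*Real.exp (-(ρ*(p:ℝ))) := by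
        have hm1 : 2*c*(m:ℝ)*(1-ρ)^p ≤ 2*c*(n:ℝ)*(1-ρ)^p := by
          apply mul_le_mul_of_nonneg_right _ (pow_nonneg (by linarith) p)
          exact mul_le_mul_of_nonneg_left hmn (by linarith : (0:ℝ) ≤ 2*c)
        have hm2 : 2*c*(n:ℝ)*(1-ρ)^p ≤ 2*c*(n:ℝ)*Real.exp (-(ρ*(p:ℝ))) := by
          apply mul_le_mul_of_nonneg_left hexp
            (mul_nonneg (mul_nonneg (by norm_num) hc0.le) hn0.le)
        have h2 : c*((K:ℝ)+1) ≤ c*(2*(n:ℝ)*Real.exp (-(ρ*(p:ℝ)))) := by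
          calc c*((K:ℝ)+1) ≤ 2*c*(m:ℝ)*(1-ρ)^p := hineq
            _ ≤ 2*c*(n:ℝ)*Real.exp (-(ρ*(p:ℝ))) := le_trans hm1 hm2
            _ = c*(2*(n:ℝ)*Real.exp (-(ρ*(p:ℝ)))) := by ring
        exact le_of_mul_le_mul_left h2 hc0
      have h3 : Real.exp (ρ*(p:ℝ)) ≤ (d:ℝ)/2 := by
        have hx : 4*(n:ℝ)/(d:ℝ) ≤ 2*(n:ℝ)*Real.exp (-(ρ*(p:ℝ))) := by linarith
        have h4 : 4*(n:ℝ) ≤ 2*(n:ℝ)*Real.exp (-(ρ*(p:ℝ)))*(d:ℝ) := by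
          rw [div_le_iff₀ hd0] at hx
          linarith
        have h5 : (2:ℝ) ≤ Real.exp (-(ρ*(p:ℝ)))*(d:ℝ) := by
          have hEd : (0:ℝ) < 2*(n:ℝ) := by linarith
          have e : 2*(n:ℝ)*Real.exp (-(ρ*(p:ℝ)))*(d:ℝ)
              = (2*(n:ℝ))*(Real.exp (-(ρ*(p:ℝ)))*(d:ℝ)) := by ring
          rw [e] at h4
          have e2 : (4:ℝ)*(n:ℝ) = (2*(n:ℝ))*2 := by ring
          rw [e2] at h4
          exact (mul_le_mul_iff_right₀ hEd).mp h4
        have he : Real.exp (ρ*(p:ℝ)) * Real.exp (-(ρ*(p:ℝ))) = 1 := by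
          rw [← Real.exp_add]
          simp
        have h6 := mul_le_mul_of_nonneg_left h5 (Real.exp_pos (ρ*(p:ℝ))).le
        have e : Real.exp (ρ*(p:ℝ)) * (Real.exp (-(ρ*(p:ℝ)))*(d:ℝ)) = (d:ℝ) := by
          rw [← mul_assoc, he, one_mul]
        linarith
      have h7 : ρ*(p:ℝ) ≤ Real.log r := by
        have hd2' : (d:ℝ)/2 ≤ r := by linarith
        have h8 := Real.log_le_log (Real.exp_pos _) (le_trans h3 hd2')
        rw [Real.log_exp] at h8
        exact h8
      have hlogr : Real.log r = ℓ * Real.log 2 / 2 := by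
        rw [hrdef, Real.log_sqrt (Nat.cast_nonneg n), hℓdef, Real.logb]
        have hlog2pos : (0:ℝ) < Real.log 2 := Real.log_pos (by norm_num)
        field_simp
      have hlog2 : Real.log 2 < 0.6931471808 := Real.log_two_lt_d9
      have h8 : ρ*(p:ℝ) ≤ (35/100)*ℓ := by
        rw [hlogr] at h7
        have h9 := mul_le_mul_of_nonneg_left hlog2.le hℓ0.le
        linarith
      have hρge : (548/100)*(ℓ^2/r) ≤ ρ := by
        have hd1r : (99/100)*(r/ℓ) ≤ (d:ℝ)-1 := by
          have h10 : r/ℓ ≤ (d:ℝ) := hd1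
          linarith
        have hrilnn : (0:ℝ) ≤ (99/100)*(r/ℓ) := by positivity
        have hsq2 : (9801/10000)*r^2 ≤ ((d:ℝ)-1)^2*ℓ^2 := by
          have h11 := mul_self_le_mul_self hrilnn hd1r
          have e1 : (99/100)*(r/ℓ)*((99/100)*(r/ℓ)) * ℓ^2 = (9801/10000)*r^2 := by
            field_simp
            ring
          have h12 := mul_le_mul_of_nonneg_right h11 (sq_nonneg ℓ)
          have e2 : ((d:ℝ)-1)*((d:ℝ)-1)*ℓ^2 = ((d:ℝ)-1)^2*ℓ^2 := by ring
          linarith [h12, e1.symm.le, e2.symm.le]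
        have e3 : ρ = (56/10)*((d:ℝ)-1)^2*ℓ^4/((n:ℝ)*r) := by
          rw [hρdef, hβdef, hcdef]
          field_simp
          ring
        have e4 : (548/100)*(ℓ^2/r) = (548/100)*ℓ^2/r := by ring
        rw [e4, e3, div_le_div_iff₀ hr0 (mul_pos hn0 hr0)]
        have hc56 : (0:ℝ) ≤ (56/10)*(ℓ^2*r) :=
          mul_nonneg (by norm_num) (mul_nonneg (sq_nonneg ℓ) hr0.le)
        have h11 := mul_le_mul_of_nonneg_left hsq2 hc56
        have e8 : (56/10)*(ℓ^2*r)*((9801/10000)*r^2) = (548856/100000)*(ℓ^2*((r*r)*r)) := by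
          ring
        have e9 : (56/10)*(ℓ^2*r)*(((d:ℝ)-1)^2*ℓ^2) = 56/10*((d:ℝ)-1)^2*ℓ^4*r := by ring
        have e10 : (548/100)*ℓ^2*((n:ℝ)*r) = (548/100)*(ℓ^2*((r*r)*r)) := by
          rw [← hrsq]; ring
        have hX : (0:ℝ) ≤ ℓ^2*((r*r)*r) :=
          mul_nonneg (sq_nonneg ℓ) (mul_nonneg (mul_nonneg hr0.le hr0.le) hr0.le)
        linarith [h11, e8, e9, e10, hX]
      have hp2 : (p:ℝ) ≤ (35/100)*ℓ/ρ := by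
        rw [le_div_iff₀ hρ0]
        have := mul_comm (p:ℝ) ρ
        linarith
      have hρr : (35/100)*ℓ/ρ ≤ (35/548)*(r/ℓ) := by
        rw [div_le_iff₀ hρ0]
        have h11 := mul_le_mul_of_nonneg_left hρge
          (show (0:ℝ) ≤ (35/548)*(r/ℓ) from
            mul_nonneg (by norm_num) (div_nonneg hr0.le hℓ0.le))
        have e : (35/548)*(r/ℓ)*((548/100)*(ℓ^2/r)) = (35/100)*ℓ := by
          field_simp
        linarith
      rw [hp]
      push_cast
      linarith
  -- |T| bound
  have hTcard : (T.card : ℝ) ≤ 2*(r/ℓ) := by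
    have h2 : (1:ℝ) ≤ (9/10)*(r/ℓ) := by linarith
    linarith
  refine ⟨T, hTI, hICT, ?_, ?_⟩
  · show (T.card : ℝ) ≤ 2 * r / ℓ
    have e : 2*r/ℓ = 2*(r/ℓ) := by ring
    rw [e]
    exact hTcard
  · show (((T ∪ (Cont7.pst (Cont7.wgt F) K δn T m).1).card : ℕ) : ℝ) ≤ 5 * (n:ℝ) / (d:ℝ)
    have hfin : ((Cont7.pst (Cont7.wgt F) K δn T m).1.card : ℝ) ≤ (K:ℝ) := by
      exact_mod_cast Cont7.pst_final_card (Cont7.wgt F) K δn T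
    have hcu : ((T ∪ (Cont7.pst (Cont7.wgt F) K δn T m).1).card : ℝ)
        ≤ (T.card:ℝ) + ((Cont7.pst (Cont7.wgt F) K δn T m).1.card : ℝ) := by
      exact_mod_cast Finset.card_union_le T (Cont7.pst (Cont7.wgt F) K δn T m).1
    have hnd : r/2 ≤ (n:ℝ)/(d:ℝ) := by
      rw [le_div_iff₀ hd0]
      have h13 := mul_le_mul_of_nonneg_left hd2r (show (0:ℝ) ≤ r/2 by linarith)
      have e : (r/2)*(2*r) = r*r := by ring
      linarith [hrsq]
    have h2rl : 2*(r/ℓ) ≤ r/50 := by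
      have h12 : r/ℓ ≤ r/100 := by
        rw [div_le_div_iff₀ hℓ0 (by norm_num : (0:ℝ) < 100)]
        exact mul_le_mul_of_nonneg_left hℓ100 hr0.le
      linarith
    have hr4 : (1:ℝ) ≤ r/4 := by linarith
    have e5 : 5*(n:ℝ)/(d:ℝ) = 4*(n:ℝ)/(d:ℝ) + (n:ℝ)/(d:ℝ) := by ring
    rw [e5]
    linarith
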